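/- Let μ be a probability measure on ℝ such that F_μ(z) = 1/∫ℝ (z - x)^{-1} dμ(x) is univalent (injective and analytic) on ℂ₊ and F_μ^{-1} extends from F_μ(ℂ₊) to an analytic univalent function on all of ℂ₊. Then φ_μ(z) := F_μ^{-1}(z) - z maps ℂ₊ into ℂ₋ ∪ ℝ. -/

import Mathlib

open Complex MeasureTheory

lemma imF_ge (μ : Measure ℝ) [IsProbabilityMeasure μ] {w : ℂ} (hw : 0 < w.im) :
    w.im ≤ ((∫ x : ℝ, (w - (x : ℂ))⁻¹ ∂μ)⁻¹).im := by
  set g : ℝ → ℂ := fun x => (w - (x : ℂ))⁻¹ with hg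
  have him : ∀ x : ℝ, (w - (x : ℂ)).im = w.im := by intro x; simp
  have hne : ∀ x : ℝ, w - (x : ℂ) ≠ 0 := by
    intro x h
    have h2 := him x
    rw [h] at h2
    simp at h2
    linarith
  have hgne : ∀ x : ℝ, g x ≠ 0 := fun x => inv_ne_zero (hne x)
  have hcont : Continuous g := (continuous_const.sub Complex.continuous_ofReal).inv₀ hne
  have hmeas : AEStronglyMeasurable g μ := hcont.aestronglyMeasurable
  have hbound : ∀ x : ℝ, ‖g x‖ ≤ w.im⁻¹ := by
    intro x
    rw [hg]
    simp only [norm_inv]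
    apply inv_anti₀ hw
    calc w.im = (w - (x:ℂ)).im := (him x).symm
      _ ≤ |(w - (x:ℂ)).im| := le_abs_self _
      _ ≤ ‖w - (x:ℂ)‖ := Complex.abs_im_le_norm _
      _ = ‖w - (x:ℂ)‖ := rfl
  have hgint : Integrable g μ :=
    (integrable_const (w.im⁻¹)).mono' hmeas (Filter.Eventually.of_forall hbound)
  have hL2 : MemLp (fun x => ‖g x‖) 2 μ :=
    MemLp.of_bound hmeas.norm (w.im⁻¹)
      (Filter.Eventually.of_forall (by intro x; rw [Real.norm_of_nonneg (norm_nonneg _)]; exact hbound x))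
  have hsqint : Integrable (fun x => ‖g x‖ ^ 2) μ := by
    have := hL2.integrable_sq
    simpa using this
  -- Cauchy-Schwarz via variance
  have hCS : (∫ x, ‖g x‖ ∂μ) ^ 2 ≤ ∫ x, ‖g x‖ ^ 2 ∂μ := by
    have h1 := ProbabilityTheory.variance_nonneg (fun x => ‖g x‖) μ
    have h2 := ProbabilityTheory.variance_eq_sub hL2
    rw [h2] at h1
    simp only [Pi.pow_apply] at h1
    linarith
  set I : ℝ := ∫ x, ‖g x‖ ^ 2 ∂μ with hI
  set G : ℂ := ∫ x, g x ∂μ with hG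
  -- imaginary part of G
  have himg : ∀ x : ℝ, (g x).im = -w.im * ‖g x‖ ^ 2 := by
    intro x
    rw [hg]
    simp only
    rw [Complex.inv_im, him x, norm_inv, inv_pow]
    rw [Complex.sq_norm]
    field_simp
  have hGim : G.im = -w.im * I := by
    have h3 : ∫ x, (g x).im ∂μ = (∫ x, g x ∂μ).im := integral_im (𝕜 := ℂ) hgint
    rw [hG, ← h3]
    rw [show (fun x => (g x).im) = fun x => -w.im * ‖g x‖ ^ 2 from funext himg]
    rw [integral_const_mul]
  have hIpos : 0 < I := by
    rw [hI]
    rw [integral_pos_iff_support_of_nonneg (fun x => sq_nonneg _) hsqint]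
    have : Function.support (fun x => ‖g x‖ ^ 2) = Set.univ := by
      ext x
      simp only [Function.mem_support, Set.mem_univ, iff_true]
      exact pow_ne_zero 2 (norm_ne_zero_iff.mpr (hgne x))
    rw [this]
    simp
  have hGne : G ≠ 0 := by
    intro h
    rw [h] at hGim
    simp at hGim
    rcases hGim with h' | h' <;> linarith
  have hnsq : Complex.normSq G ≤ I := by
    have h1 : ‖G‖ ≤ ∫ x, ‖g x‖ ∂μ := norm_integral_le_integral_norm g
    have h2 : Complex.normSq G = ‖G‖ ^ 2 := by
      rw [Complex.sq_norm]
    rw [h2]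
    calc ‖G‖ ^ 2 ≤ (∫ x, ‖g x‖ ∂μ) ^ 2 := by
          apply pow_le_pow_left₀ (norm_nonneg _) h1
      _ ≤ I := hCS
  have hnsqpos : 0 < Complex.normSq G := Complex.normSq_pos.mpr hGne
  rw [Complex.inv_im, hGim]
  have hring : -(-w.im * I) = w.im * I := by ring
  rw [hring, le_div_iff₀ hnsqpos]
  nlinarith

theorem stmt13 (μ : Measure ℝ) [IsProbabilityMeasure μ]
    (F : ℂ → ℂ)
    (hF : ∀ z : ℂ, 0 < z.im → F z = (∫ x : ℝ, (z - (x : ℂ))⁻¹ ∂μ)⁻¹)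
    (hFanal : AnalyticOn ℂ F {z : ℂ | 0 < z.im})
    (hFinj : Set.InjOn F {z : ℂ | 0 < z.im})
    (Finv : ℂ → ℂ)
    (hFinvAnal : AnalyticOn ℂ Finv {z : ℂ | 0 < z.im})
    (hFinvInj : Set.InjOn Finv {z : ℂ | 0 < z.im})
    (hext : ∀ z : ℂ, 0 < z.im → Finv (F z) = z) :
    ∀ z : ℂ, 0 < z.im → (Finv z - z).im ≤ 0 := by
  intro z hz
  rw [sub_im]
  by_cases hmem : ∃ w : ℂ, 0 < w.im ∧ F w = z
  · obtain ⟨w, hw, hFw⟩ := hmem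
    have h1 : Finv z = w := by rw [← hFw, hext w hw]
    rw [h1]
    have := imF_ge μ hw
    rw [← hF w hw, hFw] at this
    linarith
  · -- z not in the image of F; then Finv z has nonpositive imaginary part
    by_contra h
    push_neg at h
    have hFz : 0 < (Finv z).im := by linarith
    have h2 : Finv (F (Finv z)) = Finv z := hext _ hFz
    have hFmem : 0 < (F (Finv z)).im := by
      have := imF_ge μ hFz
      rw [← hF _ hFz] at this
      linarith
    have := hFinvInj hFmem hz h2
    exact hmem ⟨Finv z, hFz, this⟩
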